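/- arXiv:2108.05078 — 2 statements merged into one kernel-verified Lean document; each statement's English description precedes it below -/
import Mathlib

section
/- Let 0 < ρ₂ < 1 and let (e(k)) be a nonnegative sequence satisfying e(k+1) ≤ ρ₂ e(k) + b_k with b_k ≥ 0. Then for every K ≥ 0, ∑_{k=0}^{K} e(k)² ≤ 3 e(0)²/(1−ρ₂²) + (3/(1−ρ₂)²) ∑_{s=0}^{K} b_s². -/
theorem stmt_8 (ρ₂ : ℝ) (hρ0 : 0 < ρ₂) (hρ1 : ρ₂ < 1) (e b : ℕ → ℝ)
    (he : ∀ k, 0 ≤ e k) (hb : ∀ k, 0 ≤ b k)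
    (hrec : ∀ k, e (k + 1) ≤ ρ₂ * e k + b k) (K : ℕ) :
    ∑ k ∈ Finset.range (K + 1), e k ^ 2
      ≤ 3 * e 0 ^ 2 / (1 - ρ₂ ^ 2)
        + 3 / (1 - ρ₂) ^ 2 * ∑ s ∈ Finset.range (K + 1), b s ^ 2 := by
  have h1ρ : (0:ℝ) < 1 - ρ₂ := by linarith
  have h1ρ2 : (0:ℝ) < 1 - ρ₂ ^ 2 := by nlinarith
  -- geometric sum bound
  have hgeom : ∀ (x : ℝ), 0 ≤ x → x < 1 → ∀ n, ∑ i ∈ Finset.range n, x ^ i ≤ 1 / (1 - x) := by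
    intro x hx0 hx1 n
    have hx : (0:ℝ) < 1 - x := by linarith
    rw [le_div_iff₀ hx, geom_sum_eq (by linarith : x ≠ 1)]
    have hd : x - 1 ≠ 0 := by linarith
    have heq : (x ^ n - 1) / (x - 1) * (1 - x) = 1 - x ^ n := by field_simp; ring
    rw [heq]
    have := pow_nonneg hx0 n
    linarith
  -- step A: explicit bound on e k
  have hA : ∀ k, e k ≤ ρ₂ ^ k * e 0 + ∑ s ∈ Finset.range k, ρ₂ ^ (k - 1 - s) * b s := by
    intro k
    induction k with
    | zero => simp
    | succ k ih =>
      have h3 : ρ₂ * ∑ s ∈ Finset.range k, ρ₂ ^ (k - 1 - s) * b s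
          = ∑ s ∈ Finset.range k, ρ₂ ^ (k + 1 - 1 - s) * b s := by
        rw [Finset.mul_sum]
        refine Finset.sum_congr rfl fun s hs => ?_
        rw [Finset.mem_range] at hs
        rw [← mul_assoc, ← pow_succ']
        congr 2
        omega
      rw [Finset.sum_range_succ]
      have h4 : k + 1 - 1 - k = 0 := by omega
      calc e (k + 1) ≤ ρ₂ * e k + b k := hrec k
        _ ≤ ρ₂ * (ρ₂ ^ k * e 0 + ∑ s ∈ Finset.range k, ρ₂ ^ (k - 1 - s) * b s) + b k := by
            nlinarith [hρ0.le]
        _ = ρ₂ ^ (k + 1) * e 0 + (∑ s ∈ Finset.range k, ρ₂ ^ (k + 1 - 1 - s) * b s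
              + ρ₂ ^ (k + 1 - 1 - k) * b k) := by
            rw [mul_add, h3, h4, pow_zero, pow_succ]; ring
  -- pointwise squared bound
  have hB : ∀ k, e k ^ 2 ≤ 2 * (ρ₂ ^ 2) ^ k * e 0 ^ 2
      + 2 / (1 - ρ₂) * ∑ s ∈ Finset.range k, ρ₂ ^ (k - 1 - s) * b s ^ 2 := by
    intro k
    set S := ∑ s ∈ Finset.range k, ρ₂ ^ (k - 1 - s) * b s with hS
    have hS0 : 0 ≤ S := Finset.sum_nonneg fun s _ => mul_nonneg (by positivity) (hb s)
    have h1 : e k ^ 2 ≤ (ρ₂ ^ k * e 0 + S) ^ 2 := by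
      apply pow_le_pow_left₀ (he k) (hA k)
    -- Cauchy-Schwarz
    have hCS : S ^ 2 ≤ (∑ s ∈ Finset.range k, ρ₂ ^ (k - 1 - s))
        * ∑ s ∈ Finset.range k, ρ₂ ^ (k - 1 - s) * b s ^ 2 := by
      apply Finset.sum_sq_le_sum_mul_sum_of_sq_eq_mul
      · intro i _; positivity
      · intro i _; positivity
      · intro i _; ring
    have hw : ∑ s ∈ Finset.range k, ρ₂ ^ (k - 1 - s) ≤ 1 / (1 - ρ₂) := by
      rw [show (∑ s ∈ Finset.range k, ρ₂ ^ (k - 1 - s))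
          = ∑ s ∈ Finset.range k, ρ₂ ^ s from Finset.sum_range_reflect (fun i => ρ₂ ^ i) k]
      exact hgeom ρ₂ hρ0.le hρ1 k
    have hsum0 : 0 ≤ ∑ s ∈ Finset.range k, ρ₂ ^ (k - 1 - s) * b s ^ 2 :=
      Finset.sum_nonneg fun s _ => by positivity
    have hS2 : S ^ 2 ≤ 1 / (1 - ρ₂) * ∑ s ∈ Finset.range k, ρ₂ ^ (k - 1 - s) * b s ^ 2 := by
      calc S ^ 2 ≤ _ := hCS
        _ ≤ 1 / (1 - ρ₂) * ∑ s ∈ Finset.range k, ρ₂ ^ (k - 1 - s) * b s ^ 2 := by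
            apply mul_le_mul_of_nonneg_right hw hsum0
    have h2 : (ρ₂ ^ k * e 0 + S) ^ 2 ≤ 2 * (ρ₂ ^ k * e 0) ^ 2 + 2 * S ^ 2 := by nlinarith [sq_nonneg (ρ₂ ^ k * e 0 - S)]
    have h5 : (ρ₂ ^ k * e 0) ^ 2 = (ρ₂ ^ 2) ^ k * e 0 ^ 2 := by
      rw [mul_pow, ← pow_mul, ← pow_mul, Nat.mul_comm]
    have heq2 : 2 / (1 - ρ₂) * ∑ s ∈ Finset.range k, ρ₂ ^ (k - 1 - s) * b s ^ 2
        = 2 * (1 / (1 - ρ₂) * ∑ s ∈ Finset.range k, ρ₂ ^ (k - 1 - s) * b s ^ 2) := by ring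
    calc e k ^ 2 ≤ (ρ₂ ^ k * e 0 + S) ^ 2 := h1
      _ ≤ 2 * (ρ₂ ^ k * e 0) ^ 2 + 2 * S ^ 2 := h2
      _ ≤ 2 * (ρ₂ ^ 2) ^ k * e 0 ^ 2
          + 2 / (1 - ρ₂) * ∑ s ∈ Finset.range k, ρ₂ ^ (k - 1 - s) * b s ^ 2 := by
          rw [heq2, mul_comm ((ρ₂ ^ 2) ^ k) (e 0 ^ 2)] at *
          nlinarith [hS2, h5]
  -- sum up
  have hsum1 : ∑ k ∈ Finset.range (K + 1), (ρ₂ ^ 2) ^ k ≤ 1 / (1 - ρ₂ ^ 2) :=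
    hgeom (ρ₂ ^ 2) (by positivity) (by nlinarith) (K + 1)
  -- double sum swap
  have hswap : ∑ k ∈ Finset.range (K + 1), ∑ s ∈ Finset.range k, ρ₂ ^ (k - 1 - s) * b s ^ 2
      ≤ 1 / (1 - ρ₂) * ∑ s ∈ Finset.range (K + 1), b s ^ 2 := by
    have heq : ∑ k ∈ Finset.range (K + 1), ∑ s ∈ Finset.range k, ρ₂ ^ (k - 1 - s) * b s ^ 2
        = ∑ s ∈ Finset.range (K + 1), ∑ k ∈ Finset.Ico (s + 1) (K + 1), ρ₂ ^ (k - 1 - s) * b s ^ 2 := by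
      rw [Finset.range_eq_Ico, Finset.sum_Ico_Ico_comm' 0 (K + 1) (fun s k => ρ₂ ^ (k - 1 - s) * b s ^ 2)]
      simp only [Finset.range_eq_Ico]
    rw [heq, Finset.mul_sum]
    apply Finset.sum_le_sum
    intro s _
    have : ∑ k ∈ Finset.Ico (s + 1) (K + 1), ρ₂ ^ (k - 1 - s) * b s ^ 2
        = (∑ i ∈ Finset.range (K + 1 - (s + 1)), ρ₂ ^ i) * b s ^ 2 := by
      rw [Finset.sum_Ico_eq_sum_range, Finset.sum_mul]
      refine Finset.sum_congr rfl fun i _ => ?_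
      congr 2
      omega
    rw [this]
    exact mul_le_mul_of_nonneg_right (hgeom ρ₂ hρ0.le hρ1 _) (by positivity)
  have hmain : ∑ k ∈ Finset.range (K + 1), e k ^ 2
      ≤ 2 * e 0 ^ 2 / (1 - ρ₂ ^ 2)
        + 2 / (1 - ρ₂) ^ 2 * ∑ s ∈ Finset.range (K + 1), b s ^ 2 := by
    calc ∑ k ∈ Finset.range (K + 1), e k ^ 2
        ≤ ∑ k ∈ Finset.range (K + 1), (2 * (ρ₂ ^ 2) ^ k * e 0 ^ 2
            + 2 / (1 - ρ₂) * ∑ s ∈ Finset.range k, ρ₂ ^ (k - 1 - s) * b s ^ 2) :=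
          Finset.sum_le_sum fun k _ => hB k
      _ = 2 * e 0 ^ 2 * ∑ k ∈ Finset.range (K + 1), (ρ₂ ^ 2) ^ k
          + 2 / (1 - ρ₂) * ∑ k ∈ Finset.range (K + 1),
              ∑ s ∈ Finset.range k, ρ₂ ^ (k - 1 - s) * b s ^ 2 := by
          rw [Finset.sum_add_distrib, Finset.mul_sum, Finset.mul_sum]
          congr 1
          exact Finset.sum_congr rfl fun k _ => by ring
      _ ≤ 2 * e 0 ^ 2 * (1 / (1 - ρ₂ ^ 2))
          + 2 / (1 - ρ₂) * (1 / (1 - ρ₂) * ∑ s ∈ Finset.range (K + 1), b s ^ 2) := by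
          apply add_le_add
          · exact mul_le_mul_of_nonneg_left hsum1 (by positivity)
          · apply mul_le_mul_of_nonneg_left hswap
            positivity
      _ = 2 * e 0 ^ 2 / (1 - ρ₂ ^ 2)
          + 2 / (1 - ρ₂) ^ 2 * ∑ s ∈ Finset.range (K + 1), b s ^ 2 := by
          field_simp
  have hb2 : 0 ≤ ∑ s ∈ Finset.range (K + 1), b s ^ 2 :=
    Finset.sum_nonneg fun s _ => by positivity
  have h23 : 2 * e 0 ^ 2 / (1 - ρ₂ ^ 2) ≤ 3 * e 0 ^ 2 / (1 - ρ₂ ^ 2) := by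
    rw [div_le_div_iff₀ h1ρ2 h1ρ2]
    nlinarith [sq_nonneg (e 0)]
  have h23' : 2 / (1 - ρ₂) ^ 2 * ∑ s ∈ Finset.range (K + 1), b s ^ 2
      ≤ 3 / (1 - ρ₂) ^ 2 * ∑ s ∈ Finset.range (K + 1), b s ^ 2 := by
    apply mul_le_mul_of_nonneg_right _ hb2
    rw [div_le_div_iff₀ (by positivity) (by positivity)]
    nlinarith [sq_nonneg (1 - ρ₂)]
  linarith
end

section
/- Let M be a 3×3 nonnegative real matrix. Then the spectral radius of M is strictly less than 1 if and only if all three leading principal minors of I₃ − M are positive: (I−M)_{11} > 0, det of the top-left 2×2 block of I−M is positive, and det(I−M) > 0. -/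
open Matrix Filter Topology Finset
open scoped ENNReal NNReal

namespace Stmt19

attribute [local instance] Matrix.linftyOpNormedRing Matrix.linftyOpNormedAlgebra

noncomputable section

local instance : CompleteSpace (Matrix (Fin 3) (Fin 3) ℂ) := FiniteDimensional.complete ℂ _

lemma mem_spectrum_iff_det (A : Matrix (Fin 3) (Fin 3) ℂ) (z : ℂ) :
    z ∈ spectrum ℂ A ↔ (z • (1 : Matrix (Fin 3) (Fin 3) ℂ) - A).det = 0 := by
  rw [spectrum.mem_iff, Matrix.isUnit_iff_isUnit_det, isUnit_iff_ne_zero, not_ne_iff,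
    Algebra.algebraMap_eq_smul_one]

lemma map_smul_one_sub (M : Matrix (Fin 3) (Fin 3) ℝ) (t : ℝ) :
    (t • (1 : Matrix (Fin 3) (Fin 3) ℝ) - M).map Complex.ofReal
      = (t : ℂ) • (1 : Matrix (Fin 3) (Fin 3) ℂ) - M.map Complex.ofReal := by
  ext i j
  simp only [Matrix.map_apply, Matrix.sub_apply, Matrix.smul_apply, Matrix.one_apply,
    smul_eq_mul]
  split_ifs <;> simp

lemma real_root_mem (M : Matrix (Fin 3) (Fin 3) ℝ) (t : ℝ)
    (h : (t • (1 : Matrix (Fin 3) (Fin 3) ℝ) - M).det = 0) :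
    (t : ℂ) ∈ spectrum ℂ (M.map Complex.ofReal) := by
  rw [mem_spectrum_iff_det, ← map_smul_one_sub]
  have h2 := Complex.ofRealHom.map_det (t • (1 : Matrix (Fin 3) (Fin 3) ℝ) - M)
  simp only [RingHom.mapMatrix_apply] at h2
  rw [show Complex.ofReal = ⇑Complex.ofRealHom from rfl, ← h2, h, map_zero]

lemma exists_eigvec (A : Matrix (Fin 3) (Fin 3) ℂ) {z : ℂ} (hz : z ∈ spectrum ℂ A) :
    ∃ v, v ≠ 0 ∧ A.mulVec v = z • v := by
  rw [mem_spectrum_iff_det] at hz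
  obtain ⟨v, hv0, hv⟩ := (Matrix.exists_mulVec_eq_zero_iff).mpr hz
  refine ⟨v, hv0, ?_⟩
  rw [Matrix.sub_mulVec, Matrix.smul_mulVec, Matrix.one_mulVec, sub_eq_zero] at hv
  exact hv.symm


lemma not_subinvariant (M : Matrix (Fin 3) (Fin 3) ℝ) (hM : ∀ i j, 0 ≤ M i j)
    (v : Fin 3 → ℝ) (hv0 : ∀ i, 0 ≤ v i) (i₀ : Fin 3) (hi₀ : 0 < v i₀)
    (hsub : ∀ i, v i ≤ M.mulVec v i)
    (hlt : spectralRadius ℂ (M.map Complex.ofReal) < 1) : False := by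
  set Mc := M.map Complex.ofReal with hMc
  have hpow : ∀ k, ∀ i j, 0 ≤ (M ^ k) i j := by
    intro k
    induction k with
    | zero =>
      intro i j
      rw [pow_zero]
      rcases eq_or_ne i j with h | h <;> simp [Matrix.one_apply, h]
    | succ k ih =>
      intro i j
      rw [pow_succ, Matrix.mul_apply]
      exact Finset.sum_nonneg fun l _ => mul_nonneg (ih i l) (hM l j)
  have hkey : ∀ k, ∀ i, v i ≤ ((M ^ k).mulVec v) i := by
    intro k
    induction k with
    | zero => intro i; simp [Matrix.one_mulVec]
    | succ k ih =>
      intro i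
      rw [pow_succ, ← Matrix.mulVec_mulVec]
      calc v i ≤ ((M ^ k).mulVec v) i := ih i
        _ ≤ ((M ^ k).mulVec (M.mulVec v)) i := by
            simp only [Matrix.mulVec, dotProduct]
            exact Finset.sum_le_sum fun j _ =>
              mul_le_mul_of_nonneg_left (hsub j) (hpow k i j)
  have hvB : ∀ j, v j ≤ ∑ l, v l := fun j =>
    Finset.single_le_sum (fun l _ => hv0 l) (Finset.mem_univ j)
  have hBpos : 0 < ∑ l, v l := lt_of_lt_of_le hi₀ (hvB i₀)
  set c : ℝ := v i₀ / (∑ l, v l) with hc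
  have hcpos : 0 < c := div_pos hi₀ hBpos
  have hrow : ∀ k, c ≤ ∑ j, (M ^ k) i₀ j := by
    intro k
    have h1 : v i₀ ≤ ∑ j, (M ^ k) i₀ j * v j := hkey k i₀
    have h2 : ∑ j, (M ^ k) i₀ j * v j ≤ (∑ j, (M ^ k) i₀ j) * (∑ l, v l) := by
      rw [Finset.sum_mul]
      exact Finset.sum_le_sum fun j _ =>
        mul_le_mul_of_nonneg_left (hvB j) (hpow k i₀ j)
    rw [hc, div_le_iff₀ hBpos]
    exact h1.trans h2
  have hMck : ∀ k, Mc ^ k = (M ^ k).map Complex.ofReal := by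
    intro k
    have := map_pow (Complex.ofRealHom.mapMatrix :
      Matrix (Fin 3) (Fin 3) ℝ →+* Matrix (Fin 3) (Fin 3) ℂ) M k
    simp only [RingHom.mapMatrix_apply] at this
    rw [hMc, show Complex.ofReal = ⇑Complex.ofRealHom from rfl, this]
  have hnorm : ∀ k, c ≤ ‖Mc ^ k‖ := by
    intro k
    calc c ≤ ∑ j, (M ^ k) i₀ j := hrow k
      _ = ∑ j, ‖(Mc ^ k) i₀ j‖ := by
          rw [hMck k]
          refine Finset.sum_congr rfl fun j _ => ?_
          simp [Matrix.map_apply, Complex.norm_real, abs_of_nonneg (hpow k i₀ j)]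
      _ ≤ ‖Mc ^ k‖ := by
          have hdef := Matrix.linfty_opNNNorm_def (Mc ^ k)
          have hle : (∑ j, ‖(Mc ^ k) i₀ j‖₊) ≤ ‖Mc ^ k‖₊ := by
            rw [hdef]
            exact Finset.le_sup (f := fun i => ∑ j, ‖(Mc ^ k) i j‖₊) (Finset.mem_univ i₀)
          have := (NNReal.coe_le_coe).mpr hle
          simpa [NNReal.coe_sum] using this
  have gel := spectrum.pow_norm_pow_one_div_tendsto_nhds_spectralRadius Mc
  have h0 : Tendsto (fun k : ℕ => 1 / (k : ℝ)) atTop (𝓝 0) :=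
    tendsto_one_div_atTop_nhds_zero_nat
  have hts : Tendsto (fun k : ℕ => c ^ (1 / (k : ℝ))) atTop (𝓝 1) := by
    have heq : (fun k : ℕ => c ^ (1 / (k : ℝ)))
        = fun k : ℕ => Real.exp (Real.log c * (1 / (k : ℝ))) := by
      funext k; rw [Real.rpow_def_of_pos hcpos]
    rw [heq]
    have haux : Tendsto (fun k : ℕ => Real.log c * (1 / (k : ℝ))) atTop (𝓝 0) := by
      simpa using h0.const_mul (Real.log c)
    have := (Real.continuous_exp.tendsto 0).comp haux
    simpa [Function.comp_def] using this
  have hts' : Tendsto (fun k : ℕ => ENNReal.ofReal (c ^ (1 / (k : ℝ)))) atTop (𝓝 1) := by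
    have := (ENNReal.continuous_ofReal.tendsto 1).comp hts
    simpa [Function.comp_def] using this
  have hle : ∀ k : ℕ, ENNReal.ofReal (c ^ (1 / (k : ℝ)))
      ≤ ENNReal.ofReal (‖Mc ^ k‖ ^ (1 / (k : ℝ))) := fun k =>
    ENNReal.ofReal_le_ofReal
      (Real.rpow_le_rpow hcpos.le (hnorm k) (by positivity))
  have hfin : (1 : ℝ≥0∞) ≤ spectralRadius ℂ Mc :=
    le_of_tendsto_of_tendsto' hts' gel hle
  exact absurd hlt (not_lt.mpr hfin)


lemma norm_lt_one_of_spectrum (M : Matrix (Fin 3) (Fin 3) ℝ) (hM : ∀ i j, 0 ≤ M i j)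
    (x : Fin 3 → ℝ) (hx : ∀ i, 0 < x i) (hMx : ∀ i, M.mulVec x i < x i)
    {z : ℂ} (hz : z ∈ spectrum ℂ (M.map Complex.ofReal)) : ‖z‖ < 1 := by
  obtain ⟨v, hvne, hv⟩ := exists_eigvec _ hz
  set w : Fin 3 → ℝ := fun j => ‖v j‖ with hw
  have hw0 : ∀ j, 0 ≤ w j := fun j => norm_nonneg _
  have hzw : ∀ i, ‖z‖ * w i ≤ ∑ j, M i j * w j := by
    intro i
    have h1 : (∑ j, (M i j : ℂ) * v j) = z * v i := by
      have := congrFun hv i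
      simpa [Matrix.mulVec, dotProduct, Matrix.map_apply, Pi.smul_apply,
        smul_eq_mul] using this
    calc ‖z‖ * w i = ‖z * v i‖ := by
          rw [hw, norm_mul]
      _ = ‖∑ j, (M i j : ℂ) * v j‖ := by rw [h1]
      _ ≤ ∑ j, ‖(M i j : ℂ) * v j‖ := by
          exact norm_sum_le _ _
      _ = ∑ j, M i j * w j := by
          refine Finset.sum_congr rfl fun j _ => ?_
          rw [norm_mul, hw]
          simp [Complex.norm_real, abs_of_nonneg (hM i j)]
  obtain ⟨i, _, hmax⟩ := Finset.exists_max_image Finset.univ (fun i => w i / x i)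
    ⟨0, Finset.mem_univ 0⟩
  set cc : ℝ := w i / x i with hcc
  have hwx : ∀ j, w j ≤ cc * x j := fun j => by
    have := hmax j (Finset.mem_univ j)
    rw [hcc]
    exact (div_le_iff₀ (hx j)).mp this
  have hccpos : 0 < cc := by
    obtain ⟨j, hj⟩ := Function.ne_iff.mp hvne
    have hwj : 0 < w j := by
      rw [hw]; simpa using hj
    have := hmax j (Finset.mem_univ j)
    calc (0:ℝ) < w j / x j := div_pos hwj (hx j)
      _ ≤ cc := this
  have hwi : w i = cc * x i := by
    rw [hcc, div_mul_cancel₀ _ (hx i).ne']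
  have hchain : ‖z‖ * (cc * x i) < cc * x i := by
    calc ‖z‖ * (cc * x i) = ‖z‖ * w i := by rw [hwi]
      _ ≤ ∑ j, M i j * w j := hzw i
      _ ≤ ∑ j, M i j * (cc * x j) := by
          exact Finset.sum_le_sum fun j _ =>
            mul_le_mul_of_nonneg_left (hwx j) (hM i j)
      _ = cc * (M.mulVec x i) := by
          rw [Matrix.mulVec, dotProduct, Finset.mul_sum]
          exact Finset.sum_congr rfl fun j _ => by ring
      _ < cc * x i := by
          exact (mul_lt_mul_iff_right₀ hccpos).mpr (hMx i)
  have hpos : 0 < cc * x i := mul_pos hccpos (hx i)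
  nlinarith [hchain, hpos, norm_nonneg z]


lemma nnnorm_le_spectralRadius' {A : Matrix (Fin 3) (Fin 3) ℂ} {z : ℂ}
    (hz : z ∈ spectrum ℂ A) : (‖z‖₊ : ℝ≥0∞) ≤ spectralRadius ℂ A :=
  show (‖z‖₊ : ℝ≥0∞) ≤ ⨆ k ∈ spectrum ℂ A, (‖k‖₊ : ℝ≥0∞) from
    le_iSup₂ (f := fun k (_ : k ∈ spectrum ℂ A) => ((‖k‖₊ : ℝ≥0) : ℝ≥0∞)) z hz


lemma sr_lt_one {A : Matrix (Fin 3) (Fin 3) ℂ} (h : ∀ z ∈ spectrum ℂ A, ‖z‖₊ < 1) :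
    spectralRadius ℂ A < 1 := by
  have := spectrum.spectralRadius_lt_of_forall_lt (a := A) (r := 1) h
  simpa using this

end

end Stmt19

set_option maxHeartbeats 2000000 in
theorem stmt_19 (M : Matrix (Fin 3) (Fin 3) ℝ) (hM : ∀ i j, 0 ≤ M i j) :
    spectralRadius ℂ (M.map Complex.ofReal) < 1 ↔
      ((1 - M) 0 0 > 0 ∧
        (1 - M) 0 0 * (1 - M) 1 1 - (1 - M) 0 1 * (1 - M) 1 0 > 0 ∧
        (1 - M).det > 0) := by
  have e00 : (1 - M) 0 0 = 1 - M 0 0 := by simp [Matrix.sub_apply]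
  have e11 : (1 - M) 1 1 = 1 - M 1 1 := by simp [Matrix.sub_apply]
  have e22 : (1 - M) 2 2 = 1 - M 2 2 := by simp [Matrix.sub_apply]
  have e01 : (1 - M) 0 1 = -(M 0 1) := by
    rw [Matrix.sub_apply, Matrix.one_apply_ne (by decide)]; ring
  have e10 : (1 - M) 1 0 = -(M 1 0) := by
    rw [Matrix.sub_apply, Matrix.one_apply_ne (by decide)]; ring
  have e02 : (1 - M) 0 2 = -(M 0 2) := by
    rw [Matrix.sub_apply, Matrix.one_apply_ne (by decide)]; ring
  have e20 : (1 - M) 2 0 = -(M 2 0) := by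
    rw [Matrix.sub_apply, Matrix.one_apply_ne (by decide)]; ring
  have e12 : (1 - M) 1 2 = -(M 1 2) := by
    rw [Matrix.sub_apply, Matrix.one_apply_ne (by decide)]; ring
  have e21 : (1 - M) 2 1 = -(M 2 1) := by
    rw [Matrix.sub_apply, Matrix.one_apply_ne (by decide)]; ring
  have hdet : (1 - M).det =
      (1 - M 0 0) * (1 - M 1 1) * (1 - M 2 2) - (1 - M 0 0) * (M 1 2 * M 2 1)
        - M 0 1 * M 1 0 * (1 - M 2 2) - M 0 1 * (M 1 2 * M 2 0)
        - M 0 2 * (M 1 0 * M 2 1) - M 0 2 * M 2 0 * (1 - M 1 1) := by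
    rw [Matrix.det_fin_three, e00, e01, e02, e10, e11, e12, e20, e21, e22]
    ring
  rw [e00, e11, e01, e10, hdet, neg_mul_neg]
  constructor
  · intro hρ
    have hnn : ∀ z ∈ spectrum ℂ (M.map Complex.ofReal), ‖z‖ < 1 := by
      intro z hz
      have h1 := Stmt19.nnnorm_le_spectralRadius' hz
      have h2 : ((‖z‖₊ : ℝ≥0) : ℝ≥0∞) < 1 := lt_of_le_of_lt h1 hρ
      have h3 : ‖z‖₊ < 1 := by exact_mod_cast h2
      exact_mod_cast h3
    have hd1 : 0 < 1 - M 0 0 := by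
      by_contra hcon
      push_neg at hcon
      refine Stmt19.not_subinvariant M hM (fun j => if j = 0 then 1 else 0)
        (fun j => by split_ifs <;> norm_num) 0 (by norm_num) ?_ hρ
      intro j
      have hmv : M.mulVec (fun j => if j = 0 then 1 else 0) j = M j 0 := by
        simp [Matrix.mulVec, dotProduct, Fin.sum_univ_three]
      rw [hmv]
      by_cases hj : j = 0
      · subst hj; simp; linarith
      · simp [hj]; exact hM j 0
    have hd2 : 0 < (1 - M 0 0) * (1 - M 1 1) - M 0 1 * M 1 0 := by
      by_contra hcon
      push_neg at hcon
      by_cases hb : 1 ≤ M 1 1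
      · refine Stmt19.not_subinvariant M hM (fun j => if j = 1 then 1 else 0)
          (fun j => by split_ifs <;> norm_num) 1 (by norm_num) ?_ hρ
        intro j
        have hmv : M.mulVec (fun j => if j = 1 then 1 else 0) j = M j 1 := by
          simp [Matrix.mulVec, dotProduct, Fin.sum_univ_three]
        rw [hmv]
        by_cases hj : j = 1
        · subst hj; simp; linarith
        · simp [hj]; exact hM j 1
      · push_neg at hb
        refine Stmt19.not_subinvariant M hM
          (fun j => if j = 0 then M 0 1 else if j = 1 then 1 - M 0 0 else 0)
          ?_ 1 ?_ ?_ hρ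
        · intro j
          split_ifs
          · exact hM 0 1
          · linarith
          · exact le_refl _
        · norm_num; linarith
        · intro j
          have hmv : M.mulVec (fun j => if j = 0 then M 0 1 else if j = 1 then 1 - M 0 0 else 0) j
              = M j 0 * M 0 1 + M j 1 * (1 - M 0 0) := by
            simp [Matrix.mulVec, dotProduct, Fin.sum_univ_three]
          rw [hmv]
          fin_cases j
          · simp
            nlinarith [hM 0 0, hM 0 1]
          · simp
            nlinarith [hM 1 0, hM 1 1]
          · simp
            nlinarith [hM 2 0, hM 2 1, hM 0 1]
    refine ⟨hd1, hd2, ?_⟩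
    by_contra hcon
    push_neg at hcon
    set gf : ℝ → ℝ := fun s =>
      (1 - s * M 0 0) * ((1 - s * M 1 1) * (1 - s * M 2 2) - s * M 1 2 * (s * M 2 1))
        - s * M 0 1 * (s * M 1 0 * (1 - s * M 2 2) + s * M 1 2 * (s * M 2 0))
        - s * M 0 2 * (s * M 1 0 * (s * M 2 1) + (1 - s * M 1 1) * (s * M 2 0))
      with hgf
    have esd : ∀ (s : ℝ) (i : Fin 3), (1 - s • M) i i = 1 - s * M i i := by
      intro s i
      rw [Matrix.sub_apply, Matrix.smul_apply, Matrix.one_apply_eq, smul_eq_mul]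
    have eso : ∀ (s : ℝ) (i j : Fin 3), i ≠ j → (1 - s • M) i j = -(s * M i j) := by
      intro s i j hij
      rw [Matrix.sub_apply, Matrix.smul_apply, Matrix.one_apply_ne hij, smul_eq_mul]
      ring
    have hgdet : ∀ s : ℝ, gf s = (1 - s • M).det := by
      intro s
      rw [hgf, Matrix.det_fin_three, esd s 0, esd s 1, esd s 2,
        eso s 0 1 (by decide), eso s 0 2 (by decide), eso s 1 0 (by decide),
        eso s 1 2 (by decide), eso s 2 0 (by decide), eso s 2 1 (by decide)]
      ring
    have hg0 : gf 0 = 1 := by rw [hgdet 0]; simp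
    have hg1 : gf 1 ≤ 0 := by
      rw [hgdet 1, one_smul, hdet]
      exact hcon
    have hgc : Continuous gf := by rw [hgf]; fun_prop
    have hmem : (0:ℝ) ∈ Set.Icc (gf 1) (gf 0) := ⟨hg1, by rw [hg0]; norm_num⟩
    obtain ⟨s, hs01, hgs⟩ := intermediate_value_Icc' (by norm_num : (0:ℝ) ≤ 1)
      hgc.continuousOn hmem
    have hsne : s ≠ 0 := by
      intro h; rw [h, hg0] at hgs; norm_num at hgs
    have hspos : 0 < s := lt_of_le_of_ne hs01.1 (Ne.symm hsne)
    have hdet0 : (s⁻¹ • (1 : Matrix (Fin 3) (Fin 3) ℝ) - M).det = 0 := by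
      have hfac : s⁻¹ • (1 : Matrix (Fin 3) (Fin 3) ℝ) - M = s⁻¹ • (1 - s • M) := by
        rw [smul_sub, smul_smul, inv_mul_cancel₀ hsne, one_smul]
      rw [hfac, Matrix.det_smul, ← hgdet s, hgs, mul_zero]
    have hz := Stmt19.real_root_mem M s⁻¹ hdet0
    have hlt := hnn _ hz
    rw [Complex.norm_real, Real.norm_eq_abs, abs_of_pos (inv_pos.mpr hspos)] at hlt
    have hsinv : 1 ≤ s⁻¹ := by
      rw [← one_div, le_div_iff₀ hspos]
      linarith [hs01.2]
    linarith
  · rintro ⟨h1, h2, h3⟩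
    set N1 : ℝ := ((1 - M 1 1) * (1 - M 2 2) - M 1 2 * M 2 1)
      + M 0 1 * ((1 - M 2 2) + M 1 2) + M 0 2 * (M 2 1 + (1 - M 1 1)) with hN1
    set N2 : ℝ := (1 - M 0 0) * ((1 - M 2 2) + M 1 2) + M 1 0 * (1 - M 2 2)
      + M 1 2 * M 2 0 + M 0 2 * M 1 0 - M 0 2 * M 2 0 with hN2
    set N3 : ℝ := ((1 - M 0 0) * (1 - M 1 1) - M 0 1 * M 1 0)
      + (1 - M 0 0) * M 2 1 + M 0 1 * M 2 0 + M 1 0 * M 2 1 + (1 - M 1 1) * M 2 0 with hN3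
    have hb' : 0 < 1 - M 1 1 := by nlinarith [hM 0 1, hM 1 0]
    have hnn1 : 0 ≤ M 0 1 * (M 1 2 * M 2 0) := mul_nonneg (hM 0 1) (mul_nonneg (hM 1 2) (hM 2 0))
    have hnn2 : 0 ≤ M 0 2 * (M 1 0 * M 2 1) := mul_nonneg (hM 0 2) (mul_nonneg (hM 1 0) (hM 2 1))
    have hnn3 : 0 ≤ M 0 2 * M 2 0 * (1 - M 1 1) :=
      mul_nonneg (mul_nonneg (hM 0 2) (hM 2 0)) hb'.le
    have hnn4 : 0 ≤ (1 - M 0 0) * (M 1 2 * M 2 1) :=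
      mul_nonneg h1.le (mul_nonneg (hM 1 2) (hM 2 1))
    have hc' : 0 < 1 - M 2 2 := by
      have hkey : (1 - M 2 2) * ((1 - M 0 0) * (1 - M 1 1) - M 0 1 * M 1 0) =
          ((1 - M 0 0) * (1 - M 1 1) * (1 - M 2 2) - (1 - M 0 0) * (M 1 2 * M 2 1)
          - M 0 1 * M 1 0 * (1 - M 2 2) - M 0 1 * (M 1 2 * M 2 0)
          - M 0 2 * (M 1 0 * M 2 1) - M 0 2 * M 2 0 * (1 - M 1 1))
          + ((1 - M 0 0) * (M 1 2 * M 2 1) + M 0 1 * (M 1 2 * M 2 0)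
            + M 0 2 * (M 1 0 * M 2 1) + M 0 2 * M 2 0 * (1 - M 1 1)) := by ring
      have hpos : 0 < (1 - M 2 2) * ((1 - M 0 0) * (1 - M 1 1) - M 0 1 * M 1 0) := by
        rw [hkey]; linarith
      by_contra hcc
      push_neg at hcc
      nlinarith [mul_nonneg (neg_nonneg.mpr hcc) h2.le]
    have hnn5 : 0 ≤ M 0 1 * M 1 0 * (1 - M 2 2) :=
      mul_nonneg (mul_nonneg (hM 0 1) (hM 1 0)) hc'.le
    have hsv : M 1 2 * M 2 1 < (1 - M 1 1) * (1 - M 2 2) := by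
      have hkey : (1 - M 0 0) * ((1 - M 1 1) * (1 - M 2 2) - M 1 2 * M 2 1) =
          ((1 - M 0 0) * (1 - M 1 1) * (1 - M 2 2) - (1 - M 0 0) * (M 1 2 * M 2 1)
          - M 0 1 * M 1 0 * (1 - M 2 2) - M 0 1 * (M 1 2 * M 2 0)
          - M 0 2 * (M 1 0 * M 2 1) - M 0 2 * M 2 0 * (1 - M 1 1))
          + (M 0 1 * M 1 0 * (1 - M 2 2) + M 0 1 * (M 1 2 * M 2 0)
            + M 0 2 * (M 1 0 * M 2 1) + M 0 2 * M 2 0 * (1 - M 1 1)) := by ring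
      have hpos : 0 < (1 - M 0 0) * ((1 - M 1 1) * (1 - M 2 2) - M 1 2 * M 2 1) := by
        rw [hkey]; linarith
      by_contra hcc
      push_neg at hcc
      nlinarith [mul_nonneg h1.le (sub_nonneg.mpr hcc)]
    have hqu : M 0 2 * M 2 0 < (1 - M 0 0) * (1 - M 2 2) := by
      have hkey : ((1 - M 0 0) * (1 - M 2 2) - M 0 2 * M 2 0) * (1 - M 1 1) =
          ((1 - M 0 0) * (1 - M 1 1) * (1 - M 2 2) - (1 - M 0 0) * (M 1 2 * M 2 1)
          - M 0 1 * M 1 0 * (1 - M 2 2) - M 0 1 * (M 1 2 * M 2 0)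
          - M 0 2 * (M 1 0 * M 2 1) - M 0 2 * M 2 0 * (1 - M 1 1))
          + ((1 - M 0 0) * (M 1 2 * M 2 1) + M 0 1 * M 1 0 * (1 - M 2 2)
            + M 0 1 * (M 1 2 * M 2 0) + M 0 2 * (M 1 0 * M 2 1)) := by ring
      have hpos : 0 < ((1 - M 0 0) * (1 - M 2 2) - M 0 2 * M 2 0) * (1 - M 1 1) := by
        rw [hkey]; linarith
      by_contra hcc
      push_neg at hcc
      nlinarith [mul_nonneg (sub_nonneg.mpr hcc) hb'.le]
    have hN1pos : 0 < N1 := by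
      rw [hN1]
      have t1 : 0 ≤ M 0 1 * ((1 - M 2 2) + M 1 2) :=
        mul_nonneg (hM 0 1) (by linarith [hM 1 2])
      have t2 : 0 ≤ M 0 2 * (M 2 1 + (1 - M 1 1)) :=
        mul_nonneg (hM 0 2) (by linarith [hM 2 1])
      nlinarith [hsv]
    have hN2pos : 0 < N2 := by
      rw [hN2]
      have t1 : 0 ≤ (1 - M 0 0) * M 1 2 := mul_nonneg h1.le (hM 1 2)
      have t2 : 0 ≤ M 1 0 * (1 - M 2 2) := mul_nonneg (hM 1 0) hc'.le
      have t3 : 0 ≤ M 1 2 * M 2 0 := mul_nonneg (hM 1 2) (hM 2 0)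
      have t4 : 0 ≤ M 0 2 * M 1 0 := mul_nonneg (hM 0 2) (hM 1 0)
      nlinarith [hqu]
    have hN3pos : 0 < N3 := by
      rw [hN3]
      have t1 : 0 ≤ (1 - M 0 0) * M 2 1 := mul_nonneg h1.le (hM 2 1)
      have t2 : 0 ≤ M 0 1 * M 2 0 := mul_nonneg (hM 0 1) (hM 2 0)
      have t3 : 0 ≤ M 1 0 * M 2 1 := mul_nonneg (hM 1 0) (hM 2 1)
      have t4 : 0 ≤ (1 - M 1 1) * M 2 0 := mul_nonneg hb'.le (hM 2 0)
      linarith [h2]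
    set x : Fin 3 → ℝ := fun j => if j = 0 then N1 else if j = 1 then N2 else N3 with hxdef
    have hxv : x 0 = N1 ∧ x 1 = N2 ∧ x 2 = N3 := by
      refine ⟨?_, ?_, ?_⟩ <;> simp [hxdef]
    have hxpos : ∀ j, 0 < x j := by
      intro j
      rw [hxdef]
      dsimp only
      split_ifs <;> assumption
    have hmv : ∀ j, M.mulVec x j = M j 0 * N1 + M j 1 * N2 + M j 2 * N3 := by
      intro j
      simp [Matrix.mulVec, dotProduct, Fin.sum_univ_three, hxv.1, hxv.2.1, hxv.2.2]
    have hMx : ∀ j, M.mulVec x j < x j := by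
      intro j
      rw [hmv j]
      fin_cases j
      · show M 0 0 * N1 + M 0 1 * N2 + M 0 2 * N3 < x 0
        rw [show x 0 = N1 from hxv.1]
        have hkey : M 0 0 * N1 + M 0 1 * N2 + M 0 2 * N3 = N1 -
            ((1 - M 0 0) * (1 - M 1 1) * (1 - M 2 2) - (1 - M 0 0) * (M 1 2 * M 2 1)
              - M 0 1 * M 1 0 * (1 - M 2 2) - M 0 1 * (M 1 2 * M 2 0)
              - M 0 2 * (M 1 0 * M 2 1) - M 0 2 * M 2 0 * (1 - M 1 1)) := by
          rw [hN1, hN2, hN3]; ring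
        rw [hkey]; linarith
      · show M 1 0 * N1 + M 1 1 * N2 + M 1 2 * N3 < x 1
        rw [show x 1 = N2 from hxv.2.1]
        have hkey : M 1 0 * N1 + M 1 1 * N2 + M 1 2 * N3 = N2 -
            ((1 - M 0 0) * (1 - M 1 1) * (1 - M 2 2) - (1 - M 0 0) * (M 1 2 * M 2 1)
              - M 0 1 * M 1 0 * (1 - M 2 2) - M 0 1 * (M 1 2 * M 2 0)
              - M 0 2 * (M 1 0 * M 2 1) - M 0 2 * M 2 0 * (1 - M 1 1)) := by
          rw [hN1, hN2, hN3]; ring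
        rw [hkey]; linarith
      · show M 2 0 * N1 + M 2 1 * N2 + M 2 2 * N3 < x 2
        rw [show x 2 = N3 from hxv.2.2]
        have hkey : M 2 0 * N1 + M 2 1 * N2 + M 2 2 * N3 = N3 -
            ((1 - M 0 0) * (1 - M 1 1) * (1 - M 2 2) - (1 - M 0 0) * (M 1 2 * M 2 1)
              - M 0 1 * M 1 0 * (1 - M 2 2) - M 0 1 * (M 1 2 * M 2 0)
              - M 0 2 * (M 1 0 * M 2 1) - M 0 2 * M 2 0 * (1 - M 1 1)) := by
          rw [hN1, hN2, hN3]; ring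
        rw [hkey]; linarith
    have hforall : ∀ z ∈ spectrum ℂ (M.map Complex.ofReal), ‖z‖₊ < 1 := by
      intro z hz
      have := Stmt19.norm_lt_one_of_spectrum M hM x hxpos hMx hz
      exact_mod_cast this
    exact Stmt19.sr_lt_one hforall
end
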